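/- Let h, s : ℕ → ℝ be nonnegative sequences such that h(t + 1) ≥ 2 + (1/2)·h(t) + (1/2)·s(t) for all t ≥ 1, and such that (1/T)·Σ_{t=1}^{T} s(t) → 2 as T → ∞. Then limsup_{T→∞} (1/T)·Σ_{t=1}^{T} h(t) ≥ 6. -/

import Mathlib

open Filter Finset

theorem stmt_15 (h s : ℕ → ℝ) (hnn : ∀ t, 0 ≤ h t) (snn : ∀ t, 0 ≤ s t)
    (hdrift : ∀ t : ℕ, 1 ≤ t → h (t + 1) ≥ 2 + (1 / 2) * h t + (1 / 2) * s t)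
    (hs : Filter.Tendsto (fun T : ℕ => (1 / (T : ℝ)) * ∑ t ∈ Finset.Icc 1 T, s t)
            Filter.atTop (nhds 2)) :
    (6 : EReal) ≤
      Filter.limsup
        (fun T : ℕ => (((1 / (T : ℝ)) * ∑ t ∈ Finset.Icc 1 T, h t : ℝ) : EReal))
        Filter.atTop := by
  set S : ℕ → ℝ := fun T => ∑ t ∈ Finset.Icc 1 T, s t with hSdef
  set A : ℕ → ℝ := fun T => ∑ t ∈ Finset.Icc 1 T, h t with hAdef
  -- Step 1: unrolled drift inequality
  have unroll : ∀ n : ℕ, ∀ t : ℕ, 1 ≤ t →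
      4 * (1 - (1/2 : ℝ)^n) + ∑ k ∈ Finset.range n, (1/2 : ℝ)^(k+1) * s (t + n - 1 - k)
        ≤ h (t + n) := by
    intro n
    induction n with
    | zero => intro t ht; simpa using hnn t
    | succ n ih =>
      intro t ht
      have hd := hdrift (t + n) (le_trans ht (Nat.le_add_right t n))
      have ih' := ih t ht
      have key : ∑ k ∈ Finset.range (n+1), (1/2:ℝ)^(k+1) * s (t + (n+1) - 1 - k)
          = (1/2) * s (t + n)
            + (1/2) * ∑ k ∈ Finset.range n, (1/2:ℝ)^(k+1) * s (t + n - 1 - k) := by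
        rw [Finset.sum_range_succ', Finset.mul_sum, add_comm]
        have h1 : ∀ k, t + (n+1) - 1 - (k+1) = t + n - 1 - k := by intro k; omega
        have h2 : t + (n+1) - 1 - 0 = t + n := by omega
        simp only [h1, h2]
        congr 1
        · norm_num
        · exact Finset.sum_congr rfl (fun k _ => by ring)
      rw [key]
      have hts : t + (n+1) = (t + n) + 1 := by omega
      rw [hts]
      have hp : (1/2:ℝ)^(n+1) = (1/2)^n * (1/2) := pow_succ _ _
      rw [hp]
      linarith [hd, ih']
  -- geometric sum
  have hgeom : ∀ n : ℕ, ∑ k ∈ Finset.range n, (1/2:ℝ)^(k+1) = 1 - (1/2)^n := by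
    intro n
    induction n with
    | zero => simp
    | succ n ih2 => rw [Finset.sum_range_succ, ih2]; ring
  have Icc_Ioc : ∀ a b : ℕ, Finset.Icc (a+1) b = Finset.Ioc a b := by
    intro a b; ext x; simp only [Finset.mem_Icc, Finset.mem_Ioc]; omega
  -- Step 2: lower bound on A (T + n)
  have step2 : ∀ n T : ℕ, n ≤ T →
      (1 - (1/2:ℝ)^n) * (4 * T + S T - S n) ≤ A (T + n) := by
    intro n T hnT
    have h1 : ∑ t ∈ Finset.Icc 1 T, h (t + n) ≤ A (T + n) := by
      have hmap : ∑ t ∈ Finset.Icc 1 T, h (t + n)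
          = ∑ j ∈ Finset.Icc (1 + n) (T + n), h j := by
        rw [← Finset.map_add_right_Icc, Finset.sum_map]
        rfl
      rw [hmap]
      apply Finset.sum_le_sum_of_subset_of_nonneg
      · intro x hx
        simp only [Finset.mem_Icc] at hx ⊢
        omega
      · intro i _ _; exact hnn i
    have h2 : ∑ t ∈ Finset.Icc 1 T,
        (4 * (1 - (1/2:ℝ)^n) + ∑ k ∈ Finset.range n, (1/2:ℝ)^(k+1) * s (t + n - 1 - k))
        ≤ ∑ t ∈ Finset.Icc 1 T, h (t + n) := by
      apply Finset.sum_le_sum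
      intro t ht
      simp only [Finset.mem_Icc] at ht
      exact unroll n t ht.1
    have hcard : (Finset.Icc 1 T).card = T := by simp
    have hsplit : ∑ t ∈ Finset.Icc 1 T,
        (4 * (1 - (1/2:ℝ)^n) + ∑ k ∈ Finset.range n, (1/2:ℝ)^(k+1) * s (t + n - 1 - k))
        = T * (4 * (1 - (1/2:ℝ)^n))
          + ∑ k ∈ Finset.range n, ∑ t ∈ Finset.Icc 1 T, (1/2:ℝ)^(k+1) * s (t + n - 1 - k) := by
      rw [Finset.sum_add_distrib, Finset.sum_const, hcard, nsmul_eq_mul, Finset.sum_comm]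
    -- inner bound: for m ≤ n, ∑_{t∈Icc 1 T} s (t+m) ≥ S T - S n
    have inner : ∀ m : ℕ, m ≤ n → S T - S n ≤ ∑ t ∈ Finset.Icc 1 T, s (t + m) := by
      intro m hm
      have hmap : ∑ t ∈ Finset.Icc 1 T, s (t + m)
          = ∑ j ∈ Finset.Icc (1 + m) (T + m), s j := by
        rw [← Finset.map_add_right_Icc, Finset.sum_map]
        rfl
      have hsub2 : ∑ j ∈ Finset.Ioc m T, s j ≤ ∑ j ∈ Finset.Icc (1 + m) (T + m), s j := by
        rw [← Icc_Ioc m T]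
        apply Finset.sum_le_sum_of_subset_of_nonneg
        · intro x hx; simp only [Finset.mem_Icc] at hx ⊢; omega
        · intro i _ _; exact snn i
      have hconsec : (∑ j ∈ Finset.Ioc 0 m, s j) + ∑ j ∈ Finset.Ioc m T, s j
          = ∑ j ∈ Finset.Ioc 0 T, s j :=
        Finset.sum_Ioc_consecutive _ (Nat.zero_le m) (le_trans hm hnT)
      have e01 : ∀ b : ℕ, Finset.Icc 1 b = Finset.Ioc 0 b := by
        intro b; ext y; simp only [Finset.mem_Icc, Finset.mem_Ioc]; omega
      have hST : S T = ∑ j ∈ Finset.Ioc 0 T, s j := by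
        show ∑ t ∈ Finset.Icc 1 T, s t = _
        rw [e01 T]
      have hSm : ∑ j ∈ Finset.Ioc 0 m, s j ≤ S n := by
        show _ ≤ ∑ t ∈ Finset.Icc 1 n, s t
        rw [e01 n]
        apply Finset.sum_le_sum_of_subset_of_nonneg
        · intro x hx; simp only [Finset.mem_Ioc] at hx ⊢; omega
        · intro i _ _; exact snn i
      rw [hmap]
      have h3 : S T - S n ≤ ∑ j ∈ Finset.Ioc m T, s j := by
        rw [hST, ← hconsec]; linarith
      linarith [hsub2]
    have h4 : (1 - (1/2:ℝ)^n) * (S T - S n)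
        ≤ ∑ k ∈ Finset.range n, ∑ t ∈ Finset.Icc 1 T, (1/2:ℝ)^(k+1) * s (t + n - 1 - k) := by
      rw [← hgeom n, Finset.sum_mul]
      apply Finset.sum_le_sum
      intro k hk
      simp only [Finset.mem_range] at hk
      have hm : n - 1 - k ≤ n := by omega
      have heq2 : ∑ t ∈ Finset.Icc 1 T, (1/2:ℝ)^(k+1) * s (t + n - 1 - k)
          = (1/2:ℝ)^(k+1) * ∑ t ∈ Finset.Icc 1 T, s (t + (n - 1 - k)) := by
        rw [Finset.mul_sum]
        apply Finset.sum_congr rfl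
        intro t ht
        simp only [Finset.mem_Icc] at ht
        congr 2
        omega
      rw [heq2]
      exact mul_le_mul_of_nonneg_left (inner _ hm) (by positivity)
    calc (1 - (1/2:ℝ)^n) * (4 * T + S T - S n)
        = T * (4 * (1 - (1/2:ℝ)^n)) + (1 - (1/2:ℝ)^n) * (S T - S n) := by ring
      _ ≤ T * (4 * (1 - (1/2:ℝ)^n))
          + ∑ k ∈ Finset.range n, ∑ t ∈ Finset.Icc 1 T, (1/2:ℝ)^(k+1) * s (t + n - 1 - k) := by
          linarith
      _ = ∑ t ∈ Finset.Icc 1 T,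
          (4 * (1 - (1/2:ℝ)^n) + ∑ k ∈ Finset.range n, (1/2:ℝ)^(k+1) * s (t + n - 1 - k)) := by
          rw [hsplit]
      _ ≤ ∑ t ∈ Finset.Icc 1 T, h (t + n) := h2
      _ ≤ A (T + n) := h1
  -- Step 3: for every real c < 6, eventually c ≤ average
  have key : ∀ c : ℝ, c < 6 → ∀ᶠ T : ℕ in atTop, c ≤ (1 / (T:ℝ)) * A T := by
    intro c hc
    have hpow : Tendsto (fun n : ℕ => 6 * (1 - (1/2:ℝ)^n)) atTop (nhds 6) := by
      have hp2 : Tendsto (fun n : ℕ => (1/2:ℝ)^n) atTop (nhds 0) := by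
        apply tendsto_pow_atTop_nhds_zero_of_lt_one <;> norm_num
      have h6 : Tendsto (fun n : ℕ => 6 * (1 - (1/2:ℝ)^n)) atTop (nhds (6 * (1 - 0))) :=
        (tendsto_const_nhds.sub hp2).const_mul 6
      simpa using h6
    obtain ⟨n, hn⟩ := (hpow.eventually_const_lt hc).exists
    set x : ℝ := (1/2:ℝ)^n with hxdef
    have hφ : Tendsto (fun T : ℕ => (1 - x) * ((4 * T + S T - S n) / ((T:ℝ) + n)))
        atTop (nhds (6 * (1 - x))) := by
      have hTn : Tendsto (fun T : ℕ => (T:ℝ) / ((T:ℝ) + n)) atTop (nhds 1) := by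
        have hz : Tendsto (fun T : ℕ => (n:ℝ) / ((T:ℝ) + n)) atTop (nhds 0) := by
          have hcomp := (tendsto_const_div_atTop_nhds_zero_nat (n:ℝ)).comp
            (tendsto_add_atTop_nat n)
          apply hcomp.congr
          intro T
          simp only [Function.comp_apply]
          push_cast
          ring
        have h1' : Tendsto (fun T : ℕ => 1 - (n:ℝ) / ((T:ℝ) + n)) atTop (nhds 1) := by
          simpa using tendsto_const_nhds.sub hz
        apply h1'.congr'
        filter_upwards [eventually_ge_atTop 1] with T hT
        have hpos : (0:ℝ) < (T:ℝ) + n := by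
          have h1T : (1:ℝ) ≤ (T:ℝ) := by exact_mod_cast hT
          linarith [Nat.cast_nonneg (α := ℝ) n]
        field_simp
        ring
      have hSn : Tendsto (fun T : ℕ => S n * (1/(T:ℝ))) atTop (nhds 0) := by
        have hcd := tendsto_const_div_atTop_nhds_zero_nat (S n)
        apply hcd.congr
        intro T; rw [mul_one_div]
      have hmain : Tendsto
          (fun T : ℕ => (4 + (1/(T:ℝ)) * S T - S n * (1/(T:ℝ))) * ((T:ℝ) / ((T:ℝ) + n)))
          atTop (nhds ((4 + 2 - 0) * 1)) :=
        ((tendsto_const_nhds.add hs).sub hSn).mul hTn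
      norm_num at hmain
      have hfin := hmain.const_mul (1 - x)
      have h6x : (1 - x) * 6 = 6 * (1 - x) := by ring
      rw [h6x] at hfin
      apply hfin.congr'
      filter_upwards [eventually_ge_atTop 1] with T hT
      have hT0 : (T:ℝ) ≠ 0 := by
        have : (1:ℝ) ≤ (T:ℝ) := by exact_mod_cast hT
        linarith
      have hTn0 : (T:ℝ) + n ≠ 0 := by
        have h1T : (1:ℝ) ≤ (T:ℝ) := by exact_mod_cast hT
        have := Nat.cast_nonneg (α := ℝ) n
        linarith
      field_simp
      try ring
    have hev : ∀ᶠ T : ℕ in atTop, c ≤ (1 - x) * ((4 * T + S T - S n) / ((T:ℝ) + n)) :=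
      (hφ.eventually_const_lt hn).mono (fun T hT => le_of_lt hT)
    have hub : ∀ᶠ T : ℕ in atTop,
        (1 - x) * ((4 * T + S T - S n) / ((T:ℝ) + n)) ≤ (1 / ((T + n : ℕ):ℝ)) * A (T + n) := by
      filter_upwards [eventually_ge_atTop (max n 1)] with T hT
      have hnT : n ≤ T := le_trans (le_max_left _ _) hT
      have hT1 : 1 ≤ T := le_trans (le_max_right _ _) hT
      have hcast : ((T + n : ℕ):ℝ) = (T:ℝ) + n := by push_cast; ring
      have hpos : (0:ℝ) < (T:ℝ) + n := by
        have h1T : (1:ℝ) ≤ (T:ℝ) := by exact_mod_cast hT1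
        linarith [Nat.cast_nonneg (α := ℝ) n]
      have hb := step2 n T hnT
      rw [hcast]
      have hmul := mul_le_mul_of_nonneg_left hb (le_of_lt (one_div_pos.mpr hpos))
      calc (1 - x) * ((4 * T + S T - S n) / ((T:ℝ) + n))
          = (1 / ((T:ℝ) + n)) * ((1 - x) * (4 * T + S T - S n)) := by ring
        _ ≤ (1 / ((T:ℝ) + n)) * A (T + n) := hmul
    have hcomb : ∀ᶠ T : ℕ in atTop, c ≤ (1 / ((T + n : ℕ):ℝ)) * A (T + n) := by
      filter_upwards [hev, hub] with T hh1 hh2 using le_trans hh1 hh2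
    rw [eventually_atTop] at hcomb ⊢
    obtain ⟨T0, hT0⟩ := hcomb
    refine ⟨T0 + n, fun T hT => ?_⟩
    have hTeq : T = (T - n) + n := by omega
    rw [hTeq]
    exact hT0 (T - n) (by omega)
  -- Conclude
  by_contra hlt
  push_neg at hlt
  obtain ⟨r, hr1, hr2⟩ := EReal.exists_between_coe_real hlt
  have hr6 : r < 6 := by
    have h66 : (6:EReal) = ((6:ℝ):EReal) := by norm_cast
    rw [h66] at hr2
    exact_mod_cast hr2
  have hev := key r hr6
  have hfreq : ∃ᶠ T : ℕ in atTop, (r : EReal) ≤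
      (((1 / (T : ℝ)) * A T : ℝ) : EReal) := by
    apply Filter.Eventually.frequently
    filter_upwards [hev] with T hT
    exact_mod_cast hT
  exact absurd (Filter.le_limsup_of_frequently_le' hfreq) (not_le.mpr hr1)
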